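/- The procedure is nice at all rounds with high probability: in the ELIM algorithm with horizon T on K arms, let N_t^p be the event that i* ∈ S_t and μ_{i*} − μ_i ≤ 4ρ_t for all i ∈ S_t, and let M_t = ∩_{s=1}^t N_s^p. Then for every t with 1 ≤ t ≤ T, Pr{¬M_t} ≤ 2/T. -/

import Mathlib

open MeasureTheory Finset

/-- Empirical mean of arm `i` after `t` rounds (rounds are 0-indexed: `X s` is the
reward vector of round `s + 1`). -/
noncomputable def empMean {K : ℕ} (X : ℕ → Fin K → ℝ) (t : ℕ) (i : Fin K) : ℝ :=
  (∑ s ∈ Finset.range t, X s i) / t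

/-- The confidence radius `ρ_t = √(ln(K T²) / (2 (t-1)))`, with `ρ_1 = ∞`. -/
noncomputable def elimRho (K T t : ℕ) : EReal :=
  if t ≤ 1 then ⊤
  else ((Real.sqrt (Real.log ((K : ℝ) * (T : ℝ) ^ 2) / (2 * ((t : ℝ) - 1)))) : ℝ)

open scoped Classical in
/-- The set `S_t` of surviving arms of the ELIM algorithm with `K` arms and horizon `T`:
`S_0 = [K]`, and `S_t` keeps exactly those arms of `S_{t-1}` whose empirical mean after
`t - 1` rounds is within `2 ρ_t` of the best empirical mean over `S_{t-1}`. -/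
noncomputable def elimS (K T : ℕ) (X : ℕ → Fin K → ℝ) : ℕ → Finset (Fin K)
  | 0 => Finset.univ
  | t + 1 =>
      (elimS K T X t).filter fun i =>
        ∀ j ∈ elimS K T X t,
          ((empMean X t j - empMean X t i : ℝ) : EReal) ≤ 2 * elimRho K T (t + 1)

/-- The arm `I_t = min S_t` played by ELIM at round `t`. -/
noncomputable def elimI (K T : ℕ) [NeZero K] (X : ℕ → Fin K → ℝ) (t : ℕ) : Fin K :=
  if h : (elimS K T X t).Nonempty then (elimS K T X t).min' h else 0

/-- Extend a reward matrix on `Fin T` rounds to all of `ℕ` (by junk values `0`). -/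
noncomputable def extendRewards {K : ℕ} (T : ℕ) (ω : Fin T → Fin K → ℝ) :
    ℕ → Fin K → ℝ :=
  fun s => if h : s < T then ω ⟨s, h⟩ else 0

/-! ### Auxiliary lemmas -/


open Real ProbabilityTheory in
lemma hoeffding_key (p : ℝ) (hp0 : 0 ≤ p) (hp1 : p ≤ 1) (h : ℝ) :
    Real.log (1 - p + p * Real.exp h) ≤ p * h + h ^ 2 / 8 := by
  have hD : ∀ x : ℝ, 0 < 1 - p + p * Real.exp x := by
    intro x
    rcases eq_or_lt_of_le hp0 with h0 | h0
    · simp [← h0]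
    · have := Real.exp_pos x
      nlinarith
  set g : ℝ → ℝ := fun x => p + x / 4 - p * Real.exp x / (1 - p + p * Real.exp x) with hg
  set f : ℝ → ℝ := fun x => p * x + x ^ 2 / 8 - Real.log (1 - p + p * Real.exp x) with hf
  have hDf : ∀ x, HasDerivAt f (g x) x := by
    intro x
    have hD' : HasDerivAt (fun x => 1 - p + p * Real.exp x) (p * Real.exp x) x := by
      simpa using ((Real.hasDerivAt_exp x).const_mul p).const_add (1 - p)
    have hlog : HasDerivAt (fun x => Real.log (1 - p + p * Real.exp x))
        (p * Real.exp x / (1 - p + p * Real.exp x)) x := hD'.log (hD x).ne'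
    have h1 : HasDerivAt (fun x : ℝ => p * x + x ^ 2 / 8) (p + 2 * x / 8) x := by
      simpa using ((hasDerivAt_id x).const_mul p).fun_add ((hasDerivAt_pow 2 x).div_const 8)
    have := h1.sub hlog
    refine this.congr_deriv ?_
    simp only [hg]
    ring
  have hDg : ∀ x, HasDerivAt g
      (1 / 4 - p * Real.exp x * (1 - p) / (1 - p + p * Real.exp x) ^ 2) x := by
    intro x
    have hD' : HasDerivAt (fun x => 1 - p + p * Real.exp x) (p * Real.exp x) x := by
      simpa using ((Real.hasDerivAt_exp x).const_mul p).const_add (1 - p)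
    have hnum : HasDerivAt (fun x => p * Real.exp x) (p * Real.exp x) x :=
      (Real.hasDerivAt_exp x).const_mul p
    have hq : HasDerivAt (fun x => p * Real.exp x / (1 - p + p * Real.exp x))
        ((p * Real.exp x * (1 - p + p * Real.exp x) - p * Real.exp x * (p * Real.exp x)) /
          (1 - p + p * Real.exp x) ^ 2) x := hnum.div hD' (hD x).ne'
    have h1 : HasDerivAt (fun x : ℝ => p + x / 4) (1 / 4) x := by
      simpa using ((hasDerivAt_id x).div_const 4).const_add p
    have := h1.sub hq
    refine this.congr_deriv ?_
    have := (hD x).ne'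
    field_simp
    ring
  have hg'nonneg : ∀ x, 0 ≤ 1 / 4 - p * Real.exp x * (1 - p) / (1 - p + p * Real.exp x) ^ 2 := by
    intro x
    rw [sub_nonneg, div_le_iff₀ (pow_pos (hD x) 2)]
    nlinarith [sq_nonneg (1 - p - p * Real.exp x), Real.exp_pos x]
  have hgmono : Monotone g :=
    monotone_of_deriv_nonneg (fun x => (hDg x).differentiableAt)
      (fun x => by rw [(hDg x).deriv]; exact hg'nonneg x)
  have hg0 : g 0 = 0 := by simp [hg]
  have hf0 : f 0 = 0 := by simp [hf]
  have hfd : ∀ x, DifferentiableAt ℝ f x := fun x => (hDf x).differentiableAt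
  have hfc : Continuous f := (Differentiable.continuous (fun x => hfd x) : _)
  have hmono : MonotoneOn f (Set.Ici 0) := by
    apply monotoneOn_of_deriv_nonneg (convex_Ici 0) hfc.continuousOn
      (fun x _ => (hfd x).differentiableWithinAt)
    intro x hx
    rw [interior_Ici] at hx
    rw [(hDf x).deriv]
    rw [← hg0]
    exact hgmono (le_of_lt hx)
  have hanti : AntitoneOn f (Set.Iic 0) := by
    apply antitoneOn_of_deriv_nonpos (convex_Iic 0) hfc.continuousOn
      (fun x _ => (hfd x).differentiableWithinAt)
    intro x hx
    rw [interior_Iic] at hx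
    rw [(hDf x).deriv]
    rw [← hg0]
    exact hgmono (le_of_lt hx)
  have hfnn : 0 ≤ f h := by
    rcases le_total 0 h with hh | hh
    · rw [← hf0]; exact hmono Set.self_mem_Ici hh hh
    · rw [← hf0]; exact hanti hh Set.self_mem_Iic hh
  have := hfnn
  simp only [hf, sub_nonneg] at this
  linarith

open Real ProbabilityTheory in
lemma mgf_hoeffding {Ω : Type*} [MeasurableSpace Ω] {μ : Measure Ω} [IsProbabilityMeasure μ]
    {X : Ω → ℝ} (hmeas : Measurable X) {a b : ℝ}
    (hab : ∀ᵐ ω ∂μ, X ω ∈ Set.Icc a b) (hmean : ∫ ω, X ω ∂μ = 0) (l : ℝ) :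
    mgf X μ l ≤ Real.exp (l ^ 2 * (b - a) ^ 2 / 8) := by
  have hXint : Integrable X μ := by
    refine Integrable.mono' (integrable_const (max |a| |b|)) hmeas.aestronglyMeasurable ?_
    filter_upwards [hab] with ω hω
    rcases hω with ⟨h1, h2⟩
    rw [Real.norm_eq_abs, abs_le]
    constructor
    · calc -(max |a| |b|) ≤ -|a| := by simp
        _ ≤ a := neg_abs_le a
        _ ≤ X ω := h1
    · calc X ω ≤ b := h2
        _ ≤ |b| := le_abs_self b
        _ ≤ max |a| |b| := le_max_right _ _
  have ha0 : a ≤ 0 := by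
    have : ∫ _ω, a ∂μ ≤ ∫ ω, X ω ∂μ :=
      integral_mono_ae (integrable_const a) hXint (hab.mono fun ω hω => hω.1)
    simpa [hmean] using this
  have hb0 : 0 ≤ b := by
    have : ∫ ω, X ω ∂μ ≤ ∫ _ω, b ∂μ :=
      integral_mono_ae hXint (integrable_const b) (hab.mono fun ω hω => hω.2)
    simpa [hmean] using this
  have hexp_int : Integrable (fun ω => Real.exp (l * X ω)) μ := by
    refine Integrable.mono' (integrable_const (Real.exp (max (l * a) (l * b))))
      ((hmeas.const_mul l).exp.aestronglyMeasurable) ?_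
    filter_upwards [hab] with ω hω
    rw [Real.norm_eq_abs, abs_of_pos (Real.exp_pos _), Real.exp_le_exp]
    rcases le_total 0 l with hl | hl
    · exact le_trans (mul_le_mul_of_nonneg_left hω.2 hl) (le_max_right _ _)
    · exact le_trans (mul_le_mul_of_nonpos_left hω.1 hl) (le_max_left _ _)
  rcases lt_or_ge a b with hab' | hab'
  · have hba : (0:ℝ) < b - a := by linarith
    set p : ℝ := -a / (b - a) with hp
    have hp0 : 0 ≤ p := div_nonneg (by linarith) hba.le
    have hp1 : p ≤ 1 := by rw [div_le_one hba]; linarith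
    set h : ℝ := l * (b - a) with hh
    have hpt : ∀ᵐ ω ∂μ, Real.exp (l * X ω) ≤
        (b * Real.exp (l * a) - a * Real.exp (l * b)) / (b - a) +
          X ω * ((Real.exp (l * b) - Real.exp (l * a)) / (b - a)) := by
      filter_upwards [hab] with ω hω
      obtain ⟨h1, h2⟩ := hω
      set x := X ω
      have hθ0 : 0 ≤ (b - x) / (b - a) := div_nonneg (by linarith) hba.le
      have hθ'0 : 0 ≤ (x - a) / (b - a) := div_nonneg (by linarith) hba.le
      have hθsum : (b - x) / (b - a) + (x - a) / (b - a) = 1 := by field_simp; ring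
      have := convexOn_exp.2 (Set.mem_univ (l * a)) (Set.mem_univ (l * b)) hθ0 hθ'0 hθsum
      simp only [smul_eq_mul] at this
      have hcomb : (b - x) / (b - a) * (l * a) + (x - a) / (b - a) * (l * b) = l * x := by
        field_simp
        ring
      rw [hcomb] at this
      calc Real.exp (l * x) ≤ (b - x) / (b - a) * Real.exp (l * a) +
            (x - a) / (b - a) * Real.exp (l * b) := this
        _ = (b * Real.exp (l * a) - a * Real.exp (l * b)) / (b - a) +
            x * ((Real.exp (l * b) - Real.exp (l * a)) / (b - a)) := by
          field_simp
          ring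
    have hRHSint : Integrable (fun ω => (b * Real.exp (l * a) - a * Real.exp (l * b)) / (b - a) +
        X ω * ((Real.exp (l * b) - Real.exp (l * a)) / (b - a))) μ :=
      (integrable_const _).add (hXint.mul_const _)
    have hint_le : mgf X μ l ≤ (b * Real.exp (l * a) - a * Real.exp (l * b)) / (b - a) := by
      have := integral_mono_ae hexp_int hRHSint hpt
      rw [mgf]
      calc ∫ ω, Real.exp (l * X ω) ∂μ
          ≤ ∫ ω, ((b * Real.exp (l * a) - a * Real.exp (l * b)) / (b - a) +
              X ω * ((Real.exp (l * b) - Real.exp (l * a)) / (b - a))) ∂μ := this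
        _ = (b * Real.exp (l * a) - a * Real.exp (l * b)) / (b - a) := by
            rw [integral_add (integrable_const _) (hXint.mul_const _),
              integral_const, integral_mul_const, hmean]
            simp
    refine hint_le.trans ?_
    have hla : l * a = -p * h := by
      rw [hp, hh]; field_simp
    have hlb : l * b = (1 - p) * h := by
      rw [hp, hh]; field_simp; ring
    have hval : (b * Real.exp (l * a) - a * Real.exp (l * b)) / (b - a)
        = Real.exp (-p * h) * (1 - p + p * Real.exp h) := by
      rw [hla, hlb]
      have h1 : b / (b - a) = 1 - p := by rw [hp]; field_simp; ring
      have h2 : -a / (b - a) = p := rfl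
      have hexph : Real.exp ((1 - p) * h) = Real.exp (-p * h) * Real.exp h := by
        rw [← Real.exp_add]; ring_nf
      have : (b * Real.exp (-p * h) - a * Real.exp ((1 - p) * h)) / (b - a)
          = (b / (b - a)) * Real.exp (-p * h) + (-a / (b - a)) * Real.exp ((1 - p) * h) := by
        field_simp
        ring
      rw [this, h1, h2, hexph]
      ring
    rw [hval]
    have hDpos : 0 < 1 - p + p * Real.exp h := by
      rcases eq_or_lt_of_le hp0 with h0 | h0
      · simp [← h0]
      · have := Real.exp_pos h
        nlinarith
    have hkey : 1 - p + p * Real.exp h ≤ Real.exp (p * h + h ^ 2 / 8) :=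
      (Real.log_le_iff_le_exp hDpos).mp (hoeffding_key p hp0 hp1 h)
    calc Real.exp (-p * h) * (1 - p + p * Real.exp h)
        ≤ Real.exp (-p * h) * Real.exp (p * h + h ^ 2 / 8) :=
          mul_le_mul_of_nonneg_left hkey (le_of_lt (Real.exp_pos _))
      _ = Real.exp (h ^ 2 / 8) := by rw [← Real.exp_add]; ring_nf
      _ = Real.exp (l ^ 2 * (b - a) ^ 2 / 8) := by rw [hh]; ring_nf
  · have hae : a = 0 ∧ b = 0 := by constructor <;> linarith
    have hX0 : ∀ᵐ ω ∂μ, X ω = 0 := by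
      filter_upwards [hab] with ω hω
      linarith [hae.1 ▸ hω.1, hae.2 ▸ hω.2]
    have : mgf X μ l = 1 := by
      rw [mgf]
      have : ∫ ω, Real.exp (l * X ω) ∂μ = ∫ _ω, (1:ℝ) ∂μ := by
        refine integral_congr_ae ?_
        filter_upwards [hX0] with ω hω
        simp [hω]
      rw [this]; simp
    rw [this]
    exact Real.one_le_exp (by positivity)

open Real ProbabilityTheory in
lemma integrable_exp_of_bounded {Ω : Type*} [MeasurableSpace Ω] {μ : Measure Ω}
    [IsProbabilityMeasure μ] {X : Ω → ℝ} (hmeas : Measurable X) {a b : ℝ}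
    (hab : ∀ᵐ ω ∂μ, X ω ∈ Set.Icc a b) (l : ℝ) :
    Integrable (fun ω => Real.exp (l * X ω)) μ := by
  refine Integrable.mono' (integrable_const (Real.exp (max (l * a) (l * b))))
    ((hmeas.const_mul l).exp.aestronglyMeasurable) ?_
  filter_upwards [hab] with ω hω
  rw [Real.norm_eq_abs, abs_of_pos (Real.exp_pos _), Real.exp_le_exp]
  rcases le_total 0 l with hl | hl
  · exact le_trans (mul_le_mul_of_nonneg_left hω.2 hl) (le_max_right _ _)
  · exact le_trans (mul_le_mul_of_nonpos_left hω.1 hl) (le_max_left _ _)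

open Real ProbabilityTheory in
lemma hoeffding_tail {Ω : Type*} [MeasurableSpace Ω] {μ : Measure Ω} [IsProbabilityMeasure μ]
    {ι : Type*} {Y : ι → Ω → ℝ}
    (hindep : iIndepFun Y μ)
    (hmeas : ∀ j, Measurable (Y j)) (F : Finset ι) (hF : 0 < F.card)
    (hbound : ∀ j ∈ F, ∃ a : ℝ, ∀ᵐ ω ∂μ, Y j ω ∈ Set.Icc a (a + 1))
    (hmean : ∀ j ∈ F, ∫ ω, Y j ω ∂μ = 0) {ε : ℝ} (hε : 0 ≤ ε) :
    (μ {ω | ε ≤ ∑ j ∈ F, Y j ω}).toReal ≤ Real.exp (-2 * ε ^ 2 / F.card) := by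
  set n : ℕ := F.card with hn
  set l : ℝ := 4 * ε / n with hl
  have hnpos : (0:ℝ) < n := by exact_mod_cast hF
  have hl0 : 0 ≤ l := by positivity
  have hint : ∀ j ∈ F, Integrable (fun ω => Real.exp (l * Y j ω)) μ := by
    intro j hj
    obtain ⟨a, ha⟩ := hbound j hj
    exact integrable_exp_of_bounded (hmeas j) ha l
  have hsumint : Integrable (fun ω => Real.exp (l * (∑ j ∈ F, Y j) ω)) μ :=
    hindep.integrable_exp_mul_sum hmeas hint
  have hchernoff := measure_ge_le_exp_mul_mgf (X := ∑ j ∈ F, Y j) (μ := μ) ε hl0 hsumint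
  have hmgfsum : mgf (∑ j ∈ F, Y j) μ l = ∏ j ∈ F, mgf (Y j) μ l := hindep.mgf_sum hmeas F
  have hmgf_le : ∀ j ∈ F, mgf (Y j) μ l ≤ Real.exp (l ^ 2 / 8) := by
    intro j hj
    obtain ⟨a, ha⟩ := hbound j hj
    have := mgf_hoeffding (hmeas j) ha (hmean j hj) l
    simpa using this
  have hprod : (∏ j ∈ F, mgf (Y j) μ l) ≤ Real.exp (l ^ 2 / 8) ^ n := by
    rw [hn, ← Finset.prod_const]
    exact Finset.prod_le_prod (fun j _ => mgf_nonneg) hmgf_le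
  have heq : {ω | ε ≤ ∑ j ∈ F, Y j ω} = {ω | ε ≤ (∑ j ∈ F, Y j) ω} := by
    ext ω; simp
  calc (μ {ω | ε ≤ ∑ j ∈ F, Y j ω}).toReal
      ≤ Real.exp (-l * ε) * mgf (∑ j ∈ F, Y j) μ l := by rw [heq]; exact hchernoff
    _ ≤ Real.exp (-l * ε) * Real.exp (l ^ 2 / 8) ^ n := by
        refine mul_le_mul_of_nonneg_left ?_ (le_of_lt (Real.exp_pos _))
        rw [hmgfsum]; exact hprod
    _ = Real.exp (-l * ε + n * (l ^ 2 / 8)) := by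
        rw [← Real.exp_nat_mul, ← Real.exp_add]
    _ = Real.exp (-2 * ε ^ 2 / n) := by
        congr 1
        rw [hl]
        field_simp
        ring

open ProbabilityTheory in
lemma iIndepFun_eval {ι : Type*} [Fintype ι] {α : Type*} [MeasurableSpace α]
    (ν : Measure α) [IsProbabilityMeasure ν] :
    iIndepFun
      (fun i (ω : ι → α) => ω i) (Measure.pi fun _ => ν) := by
  classical
  rw [iIndepFun_iff_measure_inter_preimage_eq_mul]
  intro S sets hsets
  have heq : (⋂ i ∈ S, (fun ω : ι → α => ω i) ⁻¹' sets i)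
      = Set.pi Set.univ (fun i => if i ∈ S then sets i else Set.univ) := by
    ext ω
    simp only [Set.mem_iInter, Set.mem_preimage, Set.mem_pi, Set.mem_univ, true_imp_iff]
    constructor
    · intro h i
      by_cases hi : i ∈ S
      · simpa [hi] using h i hi
      · simp [hi]
    · intro h i hi
      have := h i
      simpa [hi] using this
  rw [heq, Measure.pi_pi]
  have hsingle : ∀ i : ι, (Measure.pi fun _ : ι => ν) ((fun ω : ι → α => ω i) ⁻¹' sets i)
      = ν (sets i) := by
    intro i
    have : ((fun ω : ι → α => ω i) ⁻¹' sets i)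
        = Set.pi Set.univ (Function.update (fun _ : ι => (Set.univ : Set α)) i (sets i)) := by
      ext ω
      simp [Set.eval_preimage]
    rw [this, Measure.pi_pi, Finset.prod_eq_single i ?_ ?_]
    · simp
    · intro j _ hj; simp [Function.update_of_ne hj]
    · simp
  calc (∏ i : ι, ν (if i ∈ S then sets i else Set.univ))
      = ∏ i : ι, (if i ∈ S then ν (sets i) else 1) := by
        apply Finset.prod_congr rfl
        intro i _
        by_cases h : i ∈ S <;> simp [h]
    _ = ∏ i ∈ S, ν (sets i) := by rw [Finset.prod_ite_mem, Finset.univ_inter]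
    _ = ∏ i ∈ S, (Measure.pi fun _ : ι => ν) ((fun ω : ι → α => ω i) ⁻¹' sets i) :=
        Finset.prod_congr rfl fun i _ => (hsingle i).symm

lemma map_eval_pi {ι : Type*} [Fintype ι] {α : Type*} [MeasurableSpace α]
    (ν : Measure α) [IsProbabilityMeasure ν] (j : ι) :
    Measure.map (Function.eval j) (Measure.pi fun _ : ι => ν) = ν := by
  classical
  ext s hs
  rw [Measure.map_apply (measurable_pi_apply j) hs]
  have : (Function.eval j ⁻¹' s)
      = Set.pi Set.univ (Function.update (fun _ : ι => (Set.univ : Set α)) j s) := by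
    ext ω
    simp [Set.eval_preimage]
  rw [this, Measure.pi_pi, Finset.prod_eq_single j ?_ ?_]
  · simp
  · intro b _ hb; simp [Function.update_of_ne hb]
  · simp

lemma sum_attachFin {n : ℕ} (s : Finset ℕ) (h : ∀ m ∈ s, m < n) (f : ℕ → ℝ) :
    ∑ j ∈ s.attachFin h, f j.val = ∑ m ∈ s, f m := by
  apply Finset.sum_bij (fun (j : Fin n) _ => (j : ℕ))
  · intro j hj; exact (Finset.mem_attachFin h).mp hj
  · intro j₁ h₁ j₂ h₂ hh; exact Fin.val_injective hh
  · intro m hm; exact ⟨⟨m, h m hm⟩, (Finset.mem_attachFin h).mpr hm, rfl⟩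
  · intro j hj; rfl

/-- The real-valued radius: `elimRho K T (s+1) = rr K T s` for `s ≥ 1`. -/
noncomputable def rr (K T s : ℕ) : ℝ :=
  Real.sqrt (Real.log ((K : ℝ) * (T : ℝ) ^ 2) / (2 * (s : ℝ)))

lemma rr_nonneg (K T s : ℕ) : 0 ≤ rr K T s := Real.sqrt_nonneg _

lemma elimRho_succ (K T s : ℕ) (hs : 1 ≤ s) :
    elimRho K T (s + 1) = ((rr K T s : ℝ) : EReal) := by
  rw [elimRho, if_neg (by omega)]
  congr 2
  push_cast
  ring

lemma two_mul_rho (K T s : ℕ) (hs : 1 ≤ s) :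
    (2 : EReal) * elimRho K T (s + 1) = ((2 * rr K T s : ℝ) : EReal) := by
  rw [elimRho_succ K T s hs, EReal.coe_mul]
  norm_cast

lemma four_mul_rho (K T s : ℕ) (hs : 1 ≤ s) :
    (4 : EReal) * elimRho K T (s + 1) = ((4 * rr K T s : ℝ) : EReal) := by
  rw [elimRho_succ K T s hs, EReal.coe_mul]
  norm_cast

lemma elimS_one (K T : ℕ) (X : ℕ → Fin K → ℝ) : elimS K T X 1 = Finset.univ := by
  classical
  rw [show (1 : ℕ) = 0 + 1 from rfl, elimS]
  have hrho : elimRho K T 1 = ⊤ := by rw [elimRho, if_pos le_rfl]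
  rw [Finset.eq_univ_iff_forall]
  intro i
  rw [Finset.mem_filter]
  refine ⟨by rw [elimS]; exact Finset.mem_univ i, ?_⟩
  intro j _
  rw [hrho, EReal.mul_top_of_pos (by norm_num)]
  exact le_top

lemma nice_of_good (K T : ℕ) (X : ℕ → Fin K → ℝ) (μ : Fin K → ℝ) (iStar : Fin K)
    (hstar : ∀ i, μ i ≤ μ iStar) (t : ℕ)
    (hgood : ∀ (i : Fin K) (s : ℕ), 1 ≤ s → s + 1 ≤ t →
      |empMean X s i - μ i| ≤ rr K T s) :
    ∀ s, 1 ≤ s → s ≤ t →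
      iStar ∈ elimS K T X s ∧
      ∀ i ∈ elimS K T X s, ((μ iStar - μ i : ℝ) : EReal) ≤ 4 * elimRho K T s := by
  intro s
  induction s with
  | zero => intro h; omega
  | succ s ih =>
    intro _ hst
    rcases Nat.eq_zero_or_pos s with hs0 | hs1
    · subst hs0
      constructor
      · rw [elimS_one]; exact Finset.mem_univ _
      · intro i _
        rw [show elimRho K T 1 = ⊤ by rw [elimRho, if_pos le_rfl],
          EReal.mul_top_of_pos (by norm_num)]
        exact le_top
    · obtain ⟨hmem, _⟩ := ih hs1 (by omega)
      have hb : ∀ i : Fin K, |empMean X s i - μ i| ≤ rr K T s :=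
        fun i => hgood i s hs1 hst
      classical
      have hSdef : elimS K T X (s + 1) = (elimS K T X s).filter fun i =>
          ∀ j ∈ elimS K T X s,
            ((empMean X s j - empMean X s i : ℝ) : EReal) ≤ 2 * elimRho K T (s + 1) := by
        rw [elimS]
      constructor
      · rw [hSdef, Finset.mem_filter]
        refine ⟨hmem, ?_⟩
        intro j _
        rw [two_mul_rho K T s hs1, EReal.coe_le_coe_iff]
        have h1 := abs_le.mp (hb j)
        have h2 := abs_le.mp (hb iStar)
        have := hstar j
        linarith [h1.1, h1.2, h2.1, h2.2]
      · intro i hi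
        rw [hSdef, Finset.mem_filter] at hi
        have hcond := hi.2 iStar hmem
        rw [two_mul_rho K T s hs1, EReal.coe_le_coe_iff] at hcond
        rw [four_mul_rho K T s hs1, EReal.coe_le_coe_iff]
        have h1 := abs_le.mp (hb i)
        have h2 := abs_le.mp (hb iStar)
        linarith [h1.1, h1.2, h2.1, h2.2]

set_option maxHeartbeats 1600000 in
/-- **The procedure is nice at all rounds with high probability.** In the ELIM
algorithm with horizon `T` on `K ≥ 1` arms, let `N_s^p` be the event that the best arm
`iStar` belongs to `S_s` and every arm `i ∈ S_s` satisfies `μ_{i*} - μ_i ≤ 4 ρ_s`, and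
let `M_t = ∩_{s=1}^t N_s^p`.  Then for every `1 ≤ t ≤ T`, `Pr{¬ M_t} ≤ 2 / T`. -/
theorem procedure_nice_whp
    (K T : ℕ) [NeZero K] (hT : 1 ≤ T)
    (ν : Measure (Fin K → ℝ)) [IsProbabilityMeasure ν]
    (hsupp : ∀ᵐ x ∂ν, ∀ i, x i ∈ Set.Icc (0 : ℝ) 1)
    (μ : Fin K → ℝ) (hμ : ∀ i, μ i = ∫ x, x i ∂ν)
    (iStar : Fin K) (hstar : ∀ i, μ i ≤ μ iStar)
    (t : ℕ) (ht1 : 1 ≤ t) (ht2 : t ≤ T) :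
    (Measure.pi fun _ : Fin T => ν)
      {ω | ¬ ∀ s ∈ Finset.Icc 1 t,
          iStar ∈ elimS K T (extendRewards T ω) s ∧
          ∀ i ∈ elimS K T (extendRewards T ω) s,
            ((μ iStar - μ i : ℝ) : EReal) ≤ 4 * elimRho K T s}
      ≤ ENNReal.ofReal (2 / (T : ℝ)) := by
  classical
  have hKpos : 0 < K := NeZero.pos K
  have hTpos : (0:ℝ) < T := by exact_mod_cast hT
  have hKR : (0:ℝ) < K := by exact_mod_cast hKpos
  have h1K : (1:ℝ) ≤ (K:ℝ) := by exact_mod_cast hKpos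
  have h1T : (1:ℝ) ≤ (T:ℝ) := by exact_mod_cast hT
  have hKT1 : (1:ℝ) ≤ (K:ℝ) * (T:ℝ)^2 := by nlinarith
  have hlog : 0 ≤ Real.log ((K:ℝ) * (T:ℝ)^2) := Real.log_nonneg hKT1
  set P : Measure (Fin T → Fin K → ℝ) := Measure.pi fun _ : Fin T => ν with hPdef
  have hPprob : IsProbabilityMeasure P := by rw [hPdef]; infer_instance
  have hsupp' : ∀ (j : Fin T), ∀ᵐ ω ∂P, ∀ i : Fin K, ω j i ∈ Set.Icc (0:ℝ) 1 := by
    intro j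
    have h := (MeasureTheory.Measure.tendsto_eval_ae_ae
      (μ := fun _ : Fin T => ν) (i := j)).eventually hsupp
    simpa [Function.eval] using h
  have hmeasc : ∀ (j : Fin T) (i : Fin K), Measurable (fun ω : Fin T → Fin K → ℝ => ω j i) :=
    fun j i => (measurable_pi_apply i).comp (measurable_pi_apply j)
  have hXint : ∀ (j : Fin T) (i : Fin K), Integrable (fun ω => ω j i) P := by
    intro j i
    refine Integrable.mono' (integrable_const 1) (hmeasc j i).aestronglyMeasurable ?_
    filter_upwards [hsupp' j] with ω hω
    rw [Real.norm_eq_abs, abs_le]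
    exact ⟨by linarith [(hω i).1], (hω i).2⟩
  have hmeanP : ∀ (j : Fin T) (i : Fin K), ∫ ω, ω j i ∂P = μ i := by
    intro j i
    rw [hμ i, ← map_eval_pi ν j, MeasureTheory.integral_map
      (measurable_pi_apply j).aemeasurable (measurable_pi_apply i).aestronglyMeasurable]
  -- the bad events
  set B : Fin K → ℕ → Set (Fin T → Fin K → ℝ) := fun i s =>
    {ω | rr K T s < |empMean (extendRewards T ω) s i - μ i|} with hBdef
  -- tail bound for each bad event
  have htail : ∀ (i : Fin K) (s : ℕ), 1 ≤ s → s < T →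
      P (B i s) ≤ ENNReal.ofReal (2 / ((K:ℝ) * (T:ℝ)^2)) := by
    intro i s hs1 hsT
    have hFlt : ∀ m ∈ Finset.range s, m < T := fun m hm => by
      have := Finset.mem_range.mp hm; omega
    set F : Finset (Fin T) := (Finset.range s).attachFin hFlt with hF
    have hcard : F.card = s := by rw [hF, Finset.card_attachFin, Finset.card_range]
    have hspos : (0:ℝ) < s := by exact_mod_cast hs1
    set R := rr K T s with hRdef
    have hR0 : 0 ≤ R := rr_nonneg K T s
    have hRsq : R^2 = Real.log ((K:ℝ)*(T:ℝ)^2) / (2*(s:ℝ)) := by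
      rw [hRdef, rr, Real.sq_sqrt (by positivity)]
    have hexpval : Real.exp (-2 * ((s:ℝ)*R)^2 / (F.card : ℝ)) = 1 / ((K:ℝ)*(T:ℝ)^2) := by
      rw [hcard]
      have h1 : -2 * ((s:ℝ)*R)^2 / (s:ℝ) = -(Real.log ((K:ℝ)*(T:ℝ)^2)) := by
        have : -2 * ((s:ℝ)*R)^2 / (s:ℝ) = -2 * (s:ℝ) * R^2 := by
          field_simp
        rw [this, hRsq]
        field_simp
      rw [h1, Real.exp_neg, Real.exp_log (by positivity), one_div]
    -- the two one-sided processes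
    set Y : Fin T → (Fin T → Fin K → ℝ) → ℝ := fun j ω => ω j i - μ i with hY
    set Y' : Fin T → (Fin T → Fin K → ℝ) → ℝ := fun j ω => μ i - ω j i with hY'
    have hmeasY : ∀ j, Measurable (Y j) := fun j => (hmeasc j i).sub measurable_const
    have hmeasY' : ∀ j, Measurable (Y' j) := fun j => measurable_const.sub (hmeasc j i)
    have hindepY : ProbabilityTheory.iIndepFun
        Y P :=
      (iIndepFun_eval (ι := Fin T) ν).comp (fun j x => x i - μ i)
        (fun j => (measurable_pi_apply i).sub measurable_const)
    have hindepY' : ProbabilityTheory.iIndepFun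
        Y' P :=
      (iIndepFun_eval (ι := Fin T) ν).comp (fun j x => μ i - x i)
        (fun j => measurable_const.sub (measurable_pi_apply i))
    have hμ01 : 0 ≤ μ i ∧ μ i ≤ 1 := by
      constructor
      · rw [hμ i]
        exact MeasureTheory.integral_nonneg_of_ae (hsupp.mono fun x hx => (hx i).1)
      · rw [hμ i]
        have hint : Integrable (fun x : Fin K → ℝ => x i) ν := by
          refine Integrable.mono' (integrable_const 1)
            (measurable_pi_apply i).aestronglyMeasurable ?_
          filter_upwards [hsupp] with x hx
          rw [Real.norm_eq_abs, abs_le]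
          exact ⟨by linarith [(hx i).1], (hx i).2⟩
        calc ∫ x, x i ∂ν ≤ ∫ _x, (1:ℝ) ∂ν :=
              MeasureTheory.integral_mono_ae hint (integrable_const 1)
                (hsupp.mono fun x hx => (hx i).2)
          _ = 1 := by simp
    have hboundY : ∀ j ∈ F, ∃ a : ℝ, ∀ᵐ ω ∂P, Y j ω ∈ Set.Icc a (a + 1) := by
      intro j _
      refine ⟨-μ i, ?_⟩
      filter_upwards [hsupp' j] with ω hω
      obtain ⟨h0, h1⟩ := hω i
      constructor <;> simp [hY] <;> linarith
    have hboundY' : ∀ j ∈ F, ∃ a : ℝ, ∀ᵐ ω ∂P, Y' j ω ∈ Set.Icc a (a + 1) := by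
      intro j _
      refine ⟨μ i - 1, ?_⟩
      filter_upwards [hsupp' j] with ω hω
      obtain ⟨h0, h1⟩ := hω i
      constructor <;> simp [hY'] <;> linarith
    have hmeanY : ∀ j ∈ F, ∫ ω, Y j ω ∂P = 0 := by
      intro j _
      rw [hY]
      simp only
      rw [MeasureTheory.integral_sub (hXint j i) (integrable_const _), hmeanP,
        MeasureTheory.integral_const]
      simp
    have hmeanY' : ∀ j ∈ F, ∫ ω, Y' j ω ∂P = 0 := by
      intro j _
      rw [hY']
      simp only
      rw [MeasureTheory.integral_sub (integrable_const _) (hXint j i), hmeanP,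
        MeasureTheory.integral_const]
      simp
    have hFpos : 0 < F.card := by omega
    have hε0 : 0 ≤ (s:ℝ) * R := by positivity
    have htailp := hoeffding_tail hindepY hmeasY F hFpos hboundY hmeanY hε0
    have htailm := hoeffding_tail hindepY' hmeasY' F hFpos hboundY' hmeanY' hε0
    -- sum identities
    have hsumY : ∀ ω : Fin T → Fin K → ℝ,
        ∑ j ∈ F, Y j ω = (s:ℝ) * (empMean (extendRewards T ω) s i - μ i) := by
      intro ω
      have h2 := sum_attachFin (Finset.range s) hFlt (fun m => extendRewards T ω m i - μ i)
      have h1 : ∑ j ∈ F, Y j ω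
          = ∑ j ∈ (Finset.range s).attachFin hFlt, (fun m => extendRewards T ω m i - μ i) j.val := by
        rw [hF]
        apply Finset.sum_congr rfl
        intro j _
        simp [hY, extendRewards, j.isLt]
      rw [h1, h2]
      rw [Finset.sum_sub_distrib, Finset.sum_const, Finset.card_range, empMean]
      have hs0 : (s:ℝ) ≠ 0 := ne_of_gt hspos
      field_simp
      rw [nsmul_eq_mul]
    have hsumY' : ∀ ω : Fin T → Fin K → ℝ,
        ∑ j ∈ F, Y' j ω = (s:ℝ) * (μ i - empMean (extendRewards T ω) s i) := by
      intro ω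
      have h1 : ∑ j ∈ F, Y' j ω = -∑ j ∈ F, Y j ω := by
        rw [← Finset.sum_neg_distrib]
        apply Finset.sum_congr rfl
        intro j _
        simp [hY, hY']
      rw [h1, hsumY]
      ring
    -- inclusion into one-sided tails
    have hinc : B i s ⊆ {ω | (s:ℝ)*R ≤ ∑ j ∈ F, Y j ω} ∪ {ω | (s:ℝ)*R ≤ ∑ j ∈ F, Y' j ω} := by
      intro ω hω
      rw [hBdef] at hω
      simp only [Set.mem_setOf_eq] at hω
      rcases lt_abs.mp hω with hcase | hcase
      · left
        simp only [Set.mem_setOf_eq]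
        rw [hsumY]
        nlinarith
      · right
        simp only [Set.mem_setOf_eq]
        rw [hsumY']
        nlinarith
    have honeside : ∀ (S : Set (Fin T → Fin K → ℝ)),
        (P S).toReal ≤ Real.exp (-2 * ((s:ℝ)*R)^2 / (F.card : ℝ)) →
        P S ≤ ENNReal.ofReal (1 / ((K:ℝ)*(T:ℝ)^2)) := by
      intro S hS
      rw [← ENNReal.ofReal_toReal (measure_ne_top P S)]
      exact ENNReal.ofReal_le_ofReal (hS.trans_eq hexpval)
    calc P (B i s) ≤ P ({ω | (s:ℝ)*R ≤ ∑ j ∈ F, Y j ω} ∪ {ω | (s:ℝ)*R ≤ ∑ j ∈ F, Y' j ω}) :=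
          measure_mono hinc
      _ ≤ P {ω | (s:ℝ)*R ≤ ∑ j ∈ F, Y j ω} + P {ω | (s:ℝ)*R ≤ ∑ j ∈ F, Y' j ω} :=
          measure_union_le _ _
      _ ≤ ENNReal.ofReal (1 / ((K:ℝ)*(T:ℝ)^2)) + ENNReal.ofReal (1 / ((K:ℝ)*(T:ℝ)^2)) :=
          add_le_add (honeside _ htailp) (honeside _ htailm)
      _ = ENNReal.ofReal (2 / ((K:ℝ)*(T:ℝ)^2)) := by
          rw [← ENNReal.ofReal_add (by positivity) (by positivity)]
          ring_nf
  -- inclusion of the complement of the nice event in the union of bad events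
  have hsubset : {ω | ¬ ∀ s ∈ Finset.Icc 1 t,
      iStar ∈ elimS K T (extendRewards T ω) s ∧
      ∀ i ∈ elimS K T (extendRewards T ω) s,
        ((μ iStar - μ i : ℝ) : EReal) ≤ 4 * elimRho K T s}
      ⊆ ⋃ i : Fin K, ⋃ s ∈ Finset.Icc 1 (t-1), B i s := by
    intro ω hω
    simp only [Set.mem_setOf_eq] at hω
    by_contra hb
    apply hω
    intro s hs
    rw [Finset.mem_Icc] at hs
    refine nice_of_good K T (extendRewards T ω) μ iStar hstar t ?_ s hs.1 hs.2
    intro i u hu1 hu2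
    by_contra hcon
    push_neg at hcon
    exact hb (Set.mem_iUnion.mpr ⟨i, Set.mem_iUnion₂.mpr
      ⟨u, Finset.mem_Icc.mpr ⟨hu1, by omega⟩, hcon⟩⟩)
  -- union bound
  have htbound : ∀ s ∈ Finset.Icc 1 (t-1), ∀ i : Fin K,
      P (B i s) ≤ ENNReal.ofReal (2 / ((K:ℝ) * (T:ℝ)^2)) := by
    intro s hs i
    rw [Finset.mem_Icc] at hs
    exact htail i s hs.1 (by omega)
  calc P {ω | ¬ ∀ s ∈ Finset.Icc 1 t,
            iStar ∈ elimS K T (extendRewards T ω) s ∧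
            ∀ i ∈ elimS K T (extendRewards T ω) s,
              ((μ iStar - μ i : ℝ) : EReal) ≤ 4 * elimRho K T s}
      ≤ P (⋃ i : Fin K, ⋃ s ∈ Finset.Icc 1 (t-1), B i s) := measure_mono hsubset
    _ ≤ ∑ i : Fin K, P (⋃ s ∈ Finset.Icc 1 (t-1), B i s) := by exact measure_iUnion_fintype_le P _
    _ ≤ ∑ _i : Fin K, ∑ _s ∈ Finset.Icc 1 (t-1), ENNReal.ofReal (2 / ((K:ℝ) * (T:ℝ)^2)) := by
        refine Finset.sum_le_sum fun i _ => ?_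
        refine (measure_biUnion_finset_le _ _).trans ?_
        exact Finset.sum_le_sum fun s hs => htbound s hs i
    _ = ((K * (t-1) : ℕ) : ENNReal) * ENNReal.ofReal (2 / ((K:ℝ) * (T:ℝ)^2)) := by
        rw [Finset.sum_const, Finset.sum_const, Nat.card_Icc, Finset.card_univ, Fintype.card_fin,
          smul_smul, nsmul_eq_mul]
        have h9 : t - 1 + 1 - 1 = t - 1 := by omega
        rw [h9]
    _ ≤ ENNReal.ofReal (2 / (T : ℝ)) := by
        rw [← ENNReal.ofReal_natCast, ← ENNReal.ofReal_mul (by positivity)]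
        apply ENNReal.ofReal_le_ofReal
        have h1 : ((K * (t-1) : ℕ):ℝ) = (K:ℝ) * ((t-1:ℕ):ℝ) := by push_cast; ring
        rw [h1]
        have ht1' : ((t-1:ℕ):ℝ) ≤ (T:ℝ) := by exact_mod_cast (by omega : t-1 ≤ T)
        have ht1'' : (0:ℝ) ≤ ((t-1:ℕ):ℝ) := Nat.cast_nonneg _
        have hkey : (K:ℝ) * ((t-1:ℕ):ℝ) * (2 / ((K:ℝ)*(T:ℝ)^2))
            = 2 * ((t-1:ℕ):ℝ) / (T:ℝ)^2 := by
          field_simp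
        rw [hkey, div_le_div_iff₀ (by positivity) hTpos]
        nlinarith
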